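/- arXiv:1905.12879 — 5 statements merged into one kernel-verified Lean document; each statement's English description precedes it below -/
import Mathlib

section
/- Let Z ∈ ℝ^{d×d} be symmetric positive definite, let D > 0 and B_D = {θ ∈ ℝ^d : ‖θ‖ ≤ D}, let g ∈ ℝ^d, let θ̂ ∈ ℝ^d, and let θ̂⁺ be the minimizer over θ ∈ B_D of (1/2)·‖θ - θ̂‖_Z² + θᵀg (equivalently, θ̂⁺ is the Z-generalized projection of θ̂ - Z⁻¹g onto B_D). Then for every θ ∈ B_D, gᵀ(θ̂ - θ) - (1/2)·gᵀZ⁻¹g ≤ (1/2)·(‖θ̂ - θ‖_Z² - ‖θ̂⁺ - θ‖_Z²). -/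
open Matrix

/-- Lemma 3 of the paper, online Newton step inequality.
If `θ̂⁺` minimizes `(1/2)·‖θ - θ̂‖_Z² + θᵀg` over the ball of radius `D`, then for
every `θ` in the ball, `gᵀ(θ̂ - θ) - (1/2)·gᵀZ⁻¹g ≤ (1/2)(‖θ̂ - θ‖_Z² - ‖θ̂⁺ - θ‖_Z²)`. -/
theorem online_newton_step_inequality
    {d : ℕ} (Z : Matrix (Fin d) (Fin d) ℝ) (hZ : Z.PosDef)
    (D : ℝ) (hD : 0 < D) (g θhat θhatPlus : Fin d → ℝ)
    (h_mem : Real.sqrt (∑ i, θhatPlus i ^ 2) ≤ D)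
    (h_min : ∀ θ : Fin d → ℝ, Real.sqrt (∑ i, θ i ^ 2) ≤ D →
      1 / 2 * ((θhatPlus - θhat) ⬝ᵥ (Z *ᵥ (θhatPlus - θhat))) + θhatPlus ⬝ᵥ g ≤
        1 / 2 * ((θ - θhat) ⬝ᵥ (Z *ᵥ (θ - θhat))) + θ ⬝ᵥ g) :
    ∀ θ : Fin d → ℝ, Real.sqrt (∑ i, θ i ^ 2) ≤ D →
      g ⬝ᵥ (θhat - θ) - 1 / 2 * (g ⬝ᵥ (Z⁻¹ *ᵥ g)) ≤
        1 / 2 * ((θhat - θ) ⬝ᵥ (Z *ᵥ (θhat - θ))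
          - (θhatPlus - θ) ⬝ᵥ (Z *ᵥ (θhatPlus - θ))) := by
  intro θ hθ
  have hT : Zᵀ = Z := by have h := hZ.1; simp at h; exact h
  have hsymm : ∀ x y : Fin d → ℝ, x ⬝ᵥ (Z *ᵥ y) = y ⬝ᵥ (Z *ᵥ x) := fun x y => by
    rw [Matrix.dotProduct_mulVec, ← Matrix.mulVec_transpose, hT, dotProduct_comm]
  have hQ : ∀ x : Fin d → ℝ, 0 ≤ x ⬝ᵥ (Z *ᵥ x) := fun x => by
    simpa using hZ.posSemidef.dotProduct_mulVec_nonneg x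
  have hnorm : ∀ x : EuclideanSpace ℝ (Fin d), ‖x‖ = Real.sqrt (∑ i, x i ^ 2) := fun x => by
    rw [EuclideanSpace.norm_eq]; simp [sq_abs]
  -- convexity of the ball
  have hball : ∀ (s : ℝ), 0 ≤ s → s ≤ 1 →
      Real.sqrt (∑ i, ((1 - s) • θhatPlus + s • θ) i ^ 2) ≤ D := by
    intro s hs0 hs1
    let x' : EuclideanSpace ℝ (Fin d) := WithLp.toLp 2 θhatPlus
    let y' : EuclideanSpace ℝ (Fin d) := WithLp.toLp 2 θ
    have h1 : ‖x'‖ ≤ D := by rw [hnorm]; exact h_mem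
    have h2 : ‖y'‖ ≤ D := by rw [hnorm]; exact hθ
    have h3 : ‖(1 - s) • x' + s • y'‖ ≤ D := by
      calc ‖(1 - s) • x' + s • y'‖ ≤ ‖(1 - s) • x'‖ + ‖s • y'‖ := norm_add_le _ _
        _ = (1 - s) * ‖x'‖ + s * ‖y'‖ := by
            rw [norm_smul, norm_smul, Real.norm_eq_abs, Real.norm_eq_abs,
              abs_of_nonneg (by linarith), abs_of_nonneg hs0]
        _ ≤ (1 - s) * D + s * D := by
            have := norm_nonneg x'; have := norm_nonneg y'
            nlinarith
        _ = D := by ring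
    have h4 := hnorm ((1 - s) • x' + s • y')
    rw [h4] at h3
    simpa [x', y'] using h3
  -- quadratic expansion
  have hquad : ∀ (x y : Fin d → ℝ) (s : ℝ),
      (x + s • y) ⬝ᵥ (Z *ᵥ (x + s • y)) =
        x ⬝ᵥ (Z *ᵥ x) + 2 * s * (x ⬝ᵥ (Z *ᵥ y)) + s ^ 2 * (y ⬝ᵥ (Z *ᵥ y)) := by
    intro x y s
    simp only [Matrix.mulVec_add, Matrix.mulVec_smul, dotProduct_add, add_dotProduct,
      dotProduct_smul, smul_dotProduct, smul_eq_mul]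
    rw [hsymm y x]; ring
  -- first order optimality condition
  have key : 0 ≤ (Z *ᵥ (θhatPlus - θhat) + g) ⬝ᵥ (θ - θhatPlus) := by
    by_contra hc
    push_neg at hc
    set c : Fin d → ℝ := θhatPlus - θhat with hc_def
    set v : Fin d → ℝ := θ - θhatPlus with hv_def
    set A : ℝ := (Z *ᵥ c + g) ⬝ᵥ v with hA_def
    set Qv : ℝ := v ⬝ᵥ (Z *ᵥ v) with hQv_def
    have hQv0 : 0 ≤ Qv := hQ v
    have hA : A = c ⬝ᵥ (Z *ᵥ v) + v ⬝ᵥ g := by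
      rw [hA_def, add_dotProduct, dotProduct_comm (Z *ᵥ c) v, hsymm v c, dotProduct_comm g v]
    set t : ℝ := min 1 (-A / (Qv + 1)) with ht_def
    have ht0 : 0 < t := lt_min one_pos (div_pos (neg_pos.mpr hc) (by linarith))
    have ht1 : t ≤ 1 := min_le_left _ _
    have ht2 : t * (Qv + 1) ≤ -A := by
      rw [← le_div_iff₀ (by linarith : (0:ℝ) < Qv + 1)]
      exact min_le_right _ _
    have hmemt : Real.sqrt (∑ i, (θhatPlus + t • v) i ^ 2) ≤ D := by
      have heq : θhatPlus + t • v = (1 - t) • θhatPlus + t • θ := by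
        funext i
        simp only [hv_def, Pi.add_apply, Pi.smul_apply, Pi.sub_apply, smul_eq_mul]
        ring
      rw [heq]; exact hball t ht0.le ht1
    have hmin := h_min (θhatPlus + t • v) hmemt
    have hvec : θhatPlus + t • v - θhat = c + t • v := by
      funext i
      simp only [hc_def, hv_def, Pi.add_apply, Pi.smul_apply, Pi.sub_apply, smul_eq_mul]
      ring
    rw [hvec, hquad c v t, add_dotProduct, smul_dotProduct, smul_eq_mul] at hmin
    have hstep : 0 ≤ t * A + t ^ 2 / 2 * Qv := by rw [hA]; linarith
    nlinarith [mul_le_mul_of_nonneg_left ht2 ht0.le, mul_pos ht0 ht0,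
      mul_neg_of_pos_of_neg ht0 hc]
  -- replace g by Z *ᵥ u
  set u : Fin d → ℝ := Z⁻¹ *ᵥ g with hu_def
  have hu : Z *ᵥ u = g := by
    rw [hu_def, Matrix.mulVec_mulVec,
      Matrix.mul_nonsing_inv _ (isUnit_iff_ne_zero.mpr hZ.det_pos.ne'), Matrix.one_mulVec]
  have hw : 0 ≤ (θhat - θhatPlus - u) ⬝ᵥ (Z *ᵥ (θhat - θhatPlus - u)) :=
    hQ (θhat - θhatPlus - u)
  rw [← hu] at key ⊢
  have hcomm : ∀ (x y : Fin d → ℝ), (Z *ᵥ x) ⬝ᵥ y = y ⬝ᵥ (Z *ᵥ x) := fun x y =>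
    dotProduct_comm _ _
  simp only [Matrix.mulVec_sub, Matrix.mulVec_add, dotProduct_sub, dotProduct_add,
    sub_dotProduct, add_dotProduct, hcomm] at key hw ⊢
  simp only [hsymm θ θhat, hsymm θ θhatPlus, hsymm u θhat, hsymm u θhatPlus, hsymm u θ,
    hsymm θhatPlus θhat] at key hw ⊢
  linarith
end

section
/- Let d ≥ 1, κ > 0, let Z_1 ∈ ℝ^{d×d} be symmetric positive definite, let x_1, …, x_t ∈ ℝ^d, and define Z_{s+1} = Z_s + (κ/2)·x_s x_sᵀ for s = 1, …, t. Then Σ_{s=1}^t x_sᵀ Z_{s+1}⁻¹ x_s ≤ (2/κ) · log(det(Z_{t+1}) / det(Z_1)). -/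
open Matrix

section Aux

variable {d : ℕ}

lemma vecMulVec_mulVec_aux (v w : Fin d → ℝ) :
    vecMulVec v v *ᵥ w = (v ⬝ᵥ w) • v := by
  ext i
  simp [mulVec, dotProduct, vecMulVec_apply, Finset.mul_sum, mul_comm, mul_left_comm]

lemma smul_vecMulVec_posSemidef (c : ℝ) (hc : 0 ≤ c) (v : Fin d → ℝ) :
    (c • vecMulVec v v).PosSemidef := by
  refine PosSemidef.of_dotProduct_mulVec_nonneg ?_ ?_
  · ext i j
    simp [conjTranspose_apply, vecMulVec_apply, mul_comm]
  · intro y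
    rw [smul_mulVec, dotProduct_smul, vecMulVec_mulVec_aux, dotProduct_smul,
      smul_eq_mul, smul_eq_mul]
    have h2 : (0:ℝ) ≤ (v ⬝ᵥ y) * (y ⬝ᵥ v) := by
      rw [dotProduct_comm y v]; exact mul_self_nonneg _
    simpa using mul_nonneg hc h2

lemma det_update (c : ℝ) (Z : Matrix (Fin d) (Fin d) ℝ) (hZ : Z.PosDef)
    (v : Fin d → ℝ) :
    (Z + c • vecMulVec v v).det = Z.det * (1 + c * (v ⬝ᵥ (Z⁻¹ *ᵥ v))) := by
  have hinv : IsUnit Z.det := (isUnit_iff_ne_zero).2 hZ.det_pos.ne'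
  have hZZ : Z * Z⁻¹ = 1 := mul_nonsing_inv Z hinv
  have : Z + c • vecMulVec v v = Z * (1 + Z⁻¹ * (c • vecMulVec v v)) := by
    rw [Matrix.mul_add, Matrix.mul_one, ← Matrix.mul_assoc, hZZ, Matrix.one_mul]
  rw [this, det_mul]
  congr 1
  have h1 : Z⁻¹ * (c • vecMulVec v v) = replicateCol Unit (Z⁻¹ *ᵥ (c • v)) * replicateRow Unit v := by
    rw [Matrix.replicateCol_mulVec, vecMulVec_eq (ι := Unit), mul_smul_comm, ← Matrix.mul_assoc]
    rw [show (replicateCol Unit (c • v)) = c • replicateCol Unit v from by ext i j; simp [Matrix.replicateCol],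
      Matrix.mul_smul, Matrix.smul_mul]
  rw [h1, det_one_add_replicateCol_mul_replicateRow, mulVec_smul, dotProduct_smul, smul_eq_mul]

lemma quad_update (c : ℝ) (hc : 0 < c) (Z : Matrix (Fin d) (Fin d) ℝ) (hZ : Z.PosDef)
    (v : Fin d → ℝ) :
    c * (v ⬝ᵥ ((Z + c • vecMulVec v v)⁻¹ *ᵥ v)) =
      1 - Z.det / (Z + c • vecMulVec v v).det := by
  set Z' := Z + c • vecMulVec v v with hZ'
  have hZ'pd : Z'.PosDef := hZ.add_posSemidef (smul_vecMulVec_posSemidef c hc.le v)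
  have hq : (0:ℝ) ≤ v ⬝ᵥ (Z⁻¹ *ᵥ v) := by
    have := hZ.posSemidef.inv.re_dotProduct_nonneg v
    simpa using this
  set q := v ⬝ᵥ (Z⁻¹ *ᵥ v) with hqdef
  have hdet : Z'.det = Z.det * (1 + c * q) := det_update c Z hZ v
  have hden : (0:ℝ) < 1 + c * q := by positivity
  set w := Z'⁻¹ *ᵥ v with hw
  have hZ'w : Z' *ᵥ w = v := by
    rw [hw, mulVec_mulVec, mul_nonsing_inv Z' (isUnit_iff_ne_zero.2 hZ'pd.det_pos.ne'),
      one_mulVec]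
  have hZw : Z *ᵥ w = (1 - c * (v ⬝ᵥ w)) • v := by
    have : Z *ᵥ w + c • ((v ⬝ᵥ w) • v) = v := by
      have := hZ'w
      rwa [hZ', add_mulVec, smul_mulVec, vecMulVec_mulVec_aux] at this
    have h2 : Z *ᵥ w = v - c • ((v ⬝ᵥ w) • v) := by
      rw [eq_sub_iff_add_eq]; exact this
    rw [h2, smul_smul, sub_smul, one_smul]
  have hwval : w = (1 - c * (v ⬝ᵥ w)) • (Z⁻¹ *ᵥ v) := by
    have h3 : Z⁻¹ *ᵥ (Z *ᵥ w) = w := by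
      rw [mulVec_mulVec, nonsing_inv_mul Z (isUnit_iff_ne_zero.2 hZ.det_pos.ne'), one_mulVec]
    conv_lhs => rw [← h3, hZw]
    rw [mulVec_smul]
  have hkey : v ⬝ᵥ w = (1 - c * (v ⬝ᵥ w)) * q := by
    conv_lhs => rw [hwval]
    rw [dotProduct_smul, smul_eq_mul, hqdef]
  set p := v ⬝ᵥ w with hp
  have hpq : p * (1 + c * q) = q := by linear_combination hkey
  have hpval : p = q / (1 + c * q) := by
    field_simp
    linear_combination hpq
  rw [hpval, hdet]
  have h0 : Z.det ≠ 0 := hZ.det_pos.ne'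
  field_simp
  ring

lemma quad_update_le (c : ℝ) (hc : 0 < c) (Z : Matrix (Fin d) (Fin d) ℝ) (hZ : Z.PosDef)
    (v : Fin d → ℝ) :
    c * (v ⬝ᵥ ((Z + c • vecMulVec v v)⁻¹ *ᵥ v)) ≤
      Real.log ((Z + c • vecMulVec v v).det) - Real.log Z.det := by
  set Z' := Z + c • vecMulVec v v with hZ'
  have hZ'pd : Z'.PosDef := hZ.add_posSemidef (smul_vecMulVec_posSemidef c hc.le v)
  have hratio : (0:ℝ) < Z.det / Z'.det := div_pos hZ.det_pos hZ'pd.det_pos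
  have hlog : Real.log (Z.det / Z'.det) ≤ Z.det / Z'.det - 1 :=
    Real.log_le_sub_one_of_pos hratio
  have := quad_update c hc Z hZ v
  rw [← hZ'] at this
  rw [this]
  rw [Real.log_div hZ.det_pos.ne' hZ'pd.det_pos.ne'] at hlog
  linarith

end Aux

/-- elliptical potential bound with updated Gram matrices,
Lemma 12 of Hazan et al. 2007. -/
theorem elliptical_potential_updated
    (d : ℕ) (hd : 1 ≤ d) (κ : ℝ) (hκ : 0 < κ) (t : ℕ)
    (x : ℕ → Fin d → ℝ) (Z : ℕ → Matrix (Fin d) (Fin d) ℝ)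
    (hZ1 : (Z 1).PosDef)
    (hZrec : ∀ s ∈ Finset.Icc 1 t, Z (s + 1) = Z s + (κ / 2) • vecMulVec (x s) (x s)) :
    ∑ s ∈ Finset.Icc 1 t, x s ⬝ᵥ ((Z (s + 1))⁻¹ *ᵥ x s) ≤
      2 / κ * Real.log ((Z (t + 1)).det / (Z 1).det) := by
  have hc : (0:ℝ) < κ / 2 := by positivity
  -- positive definiteness of all Z s, 1 ≤ s ≤ t+1
  have hPD : ∀ s, 1 ≤ s → s ≤ t + 1 → (Z s).PosDef := by
    intro s
    induction s with
    | zero => intro h; omega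
    | succ n ih =>
      intro _ hle
      rcases Nat.eq_zero_or_pos n with h0 | h0
      · subst h0; simpa using hZ1
      · have hprev := ih (by omega) (by omega)
        rw [hZrec n (Finset.mem_Icc.mpr ⟨h0, by omega⟩)]
        exact hprev.add_posSemidef (smul_vecMulVec_posSemidef _ hc.le _)
  induction t with
  | zero =>
    simp [div_self hZ1.det_pos.ne']
  | succ n ih =>
    have hrec' : ∀ s ∈ Finset.Icc 1 n, Z (s + 1) = Z s + (κ / 2) • vecMulVec (x s) (x s) := by
      intro s hs
      obtain ⟨h1, h2⟩ := Finset.mem_Icc.mp hs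
      exact hZrec s (Finset.mem_Icc.mpr ⟨h1, by omega⟩)
    have hPD' : ∀ s, 1 ≤ s → s ≤ n + 1 → (Z s).PosDef := fun s h1 h2 => hPD s h1 (by omega)
    have IH := ih hrec' hPD'
    rw [Finset.sum_Icc_succ_top (by omega : 1 ≤ n + 1)]
    have hstep : (κ/2) * (x (n+1) ⬝ᵥ ((Z (n+1+1))⁻¹ *ᵥ x (n+1))) ≤
        Real.log (Z (n+1+1)).det - Real.log (Z (n+1)).det := by
      have hmem : n + 1 ∈ Finset.Icc 1 (n+1) := by simp
      rw [hZrec (n+1) hmem]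
      exact quad_update_le _ hc _ (hPD' (n+1) (by omega) le_rfl) _
    have hZ1pos := hZ1.det_pos
    have hn1pos := (hPD (n+1) (by omega) (by omega)).det_pos
    have hn2pos := (hPD (n+2) (by omega) (by omega)).det_pos
    rw [Real.log_div hn2pos.ne' hZ1pos.ne']
    rw [Real.log_div hn1pos.ne' hZ1pos.ne'] at IH
    have h2 : x (n+1) ⬝ᵥ ((Z (n+1+1))⁻¹ *ᵥ x (n+1)) ≤
        2/κ * (Real.log (Z (n+1+1)).det - Real.log (Z (n+1)).det) := by
      rw [div_mul_eq_mul_div, le_div_iff₀ hκ]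
      nlinarith [hstep]
    have : (2:ℝ)/κ * (Real.log (Z (n+1+1)).det - Real.log (Z 1).det)
        = 2/κ * (Real.log (Z (n+1)).det - Real.log (Z 1).det)
          + 2/κ * (Real.log (Z (n+1+1)).det - Real.log (Z (n+1)).det) := by ring
    rw [this]
    exact add_le_add IH h2
end

section
/- Let d ≥ 1, κ > 0, λ ≥ max(1, κ/2), and let x_1, …, x_T ∈ ℝ^d with ‖x_t‖ ≤ 1 for every t. Define Z_1 = λ·I_d and Z_{t+1} = Z_t + (κ/2)·x_t x_tᵀ. Then Σ_{t=1}^T x_tᵀ Z_t⁻¹ x_t ≤ (4/κ) · log(det(Z_{T+1}) / det(Z_1)). -/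
open Matrix

private lemma ep_log_key {s : ℝ} (h0 : 0 ≤ s) (h1 : s ≤ 1) : s ≤ 2 * Real.log (1 + s) := by
  have hp : (0:ℝ) < 1 + s := by linarith
  have h2 : Real.exp (s/2) ≤ 1 + s := by
    have h3 := Real.add_one_le_exp (-(s/2))
    have h4 : Real.exp (s/2) * Real.exp (-(s/2)) = 1 := by
      rw [← Real.exp_add]; simp
    nlinarith [Real.exp_pos (s/2), Real.exp_pos (-(s/2))]
  have := (Real.le_log_iff_exp_le hp).mpr h2
  linarith

private lemma ep_quad {d : ℕ} (u y : Fin d → ℝ) :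
    y ⬝ᵥ (vecMulVec u u *ᵥ y) = (u ⬝ᵥ y)^2 := by
  simp only [sq, dotProduct, mulVec, vecMulVec_apply, Finset.mul_sum]
  rw [← Finset.mul_sum, Finset.sum_mul_sum]
  exact Finset.sum_congr rfl fun i _ => Finset.sum_congr rfl fun j _ => by ring

private lemma ep_smul_one_posDef {d : ℕ} {lam : ℝ} (h : 0 < lam) :
    (lam • (1 : Matrix (Fin d) (Fin d) ℝ)).PosDef := by
  refine Matrix.PosDef.of_dotProduct_mulVec_pos ?_ (fun y hy => ?_)
  · ext i j
    simp [Matrix.IsHermitian, Matrix.conjTranspose_apply, Matrix.one_apply, eq_comm]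
  · simp only [smul_mulVec, one_mulVec, dotProduct_smul, smul_eq_mul]
    have : 0 < y ⬝ᵥ y := by
      simpa using Matrix.dotProduct_star_self_pos_iff.mpr hy
    positivity

private lemma ep_step_psd {d : ℕ} {c : ℝ} (hc : 0 ≤ c) (v : Fin d → ℝ) :
    (c • vecMulVec v v).PosSemidef := by
  refine Matrix.PosSemidef.of_dotProduct_mulVec_nonneg ?_ (fun y => ?_)
  · ext i j
    simp [Matrix.IsHermitian, Matrix.conjTranspose_apply, vecMulVec_apply, mul_comm]
  · have : y ⬝ᵥ ((c • vecMulVec v v) *ᵥ y) = c * (v ⬝ᵥ y)^2 := by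
      rw [smul_mulVec, dotProduct_smul, smul_eq_mul, ep_quad]
    simp only [star_trivial]
    rw [this]
    positivity

private lemma ep_det_lemma {d : ℕ} (A : Matrix (Fin d) (Fin d) ℝ) (hA : IsUnit A.det)
    (c : ℝ) (x : Fin d → ℝ) :
    (A + c • vecMulVec x x).det = A.det * (1 + c * (x ⬝ᵥ A⁻¹ *ᵥ x)) := by
  have h1 : c • vecMulVec x x = replicateCol (Fin 1) (c • x) * replicateRow (Fin 1) x := by
    ext i j
    simp [vecMulVec_apply, Matrix.mul_apply, Matrix.replicateCol_apply, Matrix.replicateRow_apply, mul_assoc]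
  rw [h1]; erw [det_add_replicateCol_mul_replicateRow (ι := Fin 1) hA]
  congr 1
  simp only [det_unique, Fin.default_eq_zero]
  simp only [Matrix.add_apply, Matrix.one_apply_eq, Matrix.mul_apply, Matrix.replicateCol_apply,
    Matrix.replicateRow_apply, dotProduct, mulVec, Finset.mul_sum, Pi.smul_apply, smul_eq_mul,
    Finset.sum_mul]
  congr 1
  rw [Finset.sum_comm]
  exact Finset.sum_congr rfl fun i _ => Finset.sum_congr rfl fun j _ => by ring

/-- elliptical potential bound with pre-update Gram matrices,
Lemma 11 of Abbasi-Yadkori et al. 2011, adapted. -/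
theorem elliptical_potential_preupdate
    (d : ℕ) (hd : 1 ≤ d) (κ lam : ℝ) (hκ : 0 < κ) (hlam : max 1 (κ / 2) ≤ lam)
    (T : ℕ) (x : ℕ → Fin d → ℝ)
    (hx : ∀ t ∈ Finset.Icc 1 T, Real.sqrt (∑ j, x t j ^ 2) ≤ 1)
    (Z : ℕ → Matrix (Fin d) (Fin d) ℝ)
    (hZ1 : Z 1 = lam • (1 : Matrix (Fin d) (Fin d) ℝ))
    (hZrec : ∀ t ∈ Finset.Icc 1 T, Z (t + 1) = Z t + (κ / 2) • vecMulVec (x t) (x t)) :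
    ∑ t ∈ Finset.Icc 1 T, x t ⬝ᵥ ((Z t)⁻¹ *ᵥ x t) ≤
      4 / κ * Real.log ((Z (T + 1)).det / (Z 1).det) := by
  have hlam1 : (1:ℝ) ≤ lam := le_trans (le_max_left _ _) hlam
  have hlamc : κ/2 ≤ lam := le_trans (le_max_right _ _) hlam
  have hlam0 : (0:ℝ) < lam := lt_of_lt_of_le one_pos hlam1
  have hc : (0:ℝ) < κ/2 := by linarith
  -- the gap Z t - lam • 1 is positive semidefinite
  have key : ∀ t, t ≤ T → (Z (t+1) - lam • 1).PosSemidef := by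
    intro t
    induction t with
    | zero =>
      intro _
      rw [hZ1, sub_self]
      exact Matrix.PosSemidef.zero
    | succ n ih =>
      intro ht
      rw [hZrec (n+1) (by simp only [Finset.mem_Icc]; omega)]
      have heq : Z (n+1) + (κ/2) • vecMulVec (x (n+1)) (x (n+1)) - lam • 1
          = (Z (n+1) - lam • 1) + (κ/2) • vecMulVec (x (n+1)) (x (n+1)) := by
        abel
      rw [heq]
      exact (ih (by omega)).add (ep_step_psd hc.le _)
  have hgap : ∀ t, 1 ≤ t → t ≤ T + 1 → (Z t - lam • 1).PosSemidef := by
    intro t h1 h2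
    obtain ⟨s, rfl⟩ : ∃ s, t = s + 1 := ⟨t - 1, by omega⟩
    exact key s (by omega)
  have hPD : ∀ t, 1 ≤ t → t ≤ T + 1 → (Z t).PosDef := by
    intro t h1 h2
    have h := (ep_smul_one_posDef (d := d) hlam0).add_posSemidef (hgap t h1 h2)
    rwa [add_sub_cancel] at h
  -- per-round bound
  have hterm : ∀ t ∈ Finset.Icc 1 T,
      x t ⬝ᵥ ((Z t)⁻¹ *ᵥ x t) ≤
        4 / κ * (Real.log (Z (t+1)).det - Real.log (Z t).det) := by
    intro t ht
    rw [Finset.mem_Icc] at ht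
    have hPDt : (Z t).PosDef := hPD t ht.1 (by omega)
    have hdet : IsUnit (Z t).det := isUnit_iff_ne_zero.mpr hPDt.det_pos.ne'
    set y : Fin d → ℝ := (Z t)⁻¹ *ᵥ x t with hy
    set u : ℝ := x t ⬝ᵥ y with hu
    have hZy : Z t *ᵥ y = x t := by
      rw [hy, mulVec_mulVec, Matrix.mul_nonsing_inv _ hdet, one_mulVec]
    have hu0 : 0 ≤ u := by
      have h := hPDt.inv.posSemidef.dotProduct_mulVec_nonneg (x t)
      simp only [star_trivial] at h
      exact h
    -- lam * (y ⬝ᵥ y) ≤ u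
    have h1 : lam * (y ⬝ᵥ y) ≤ u := by
      have h := (hgap t ht.1 (by omega)).dotProduct_mulVec_nonneg y
      simp only [star_trivial, sub_mulVec, smul_mulVec, one_mulVec,
        dotProduct_sub, dotProduct_smul, smul_eq_mul, sub_nonneg] at h
      calc lam * (y ⬝ᵥ y) ≤ y ⬝ᵥ (Z t *ᵥ y) := h
        _ = u := by rw [hZy, dotProduct_comm]
    -- Cauchy-Schwarz
    have hCS : u^2 ≤ (x t ⬝ᵥ x t) * (y ⬝ᵥ y) := by
      have := Finset.sum_mul_sq_le_sq_mul_sq Finset.univ (x t) y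
      simpa [hu, dotProduct, sq] using this
    have hyy : 0 ≤ y ⬝ᵥ y := by
      simp only [dotProduct]
      exact Finset.sum_nonneg fun i _ => mul_self_nonneg _
    have hxx : x t ⬝ᵥ x t ≤ 1 := by
      have hs := hx t (Finset.mem_Icc.mpr ht)
      have hnn : 0 ≤ ∑ j, x t j ^ 2 := Finset.sum_nonneg fun i _ => sq_nonneg _
      have hsq := Real.sq_sqrt hnn
      have : x t ⬝ᵥ x t = ∑ j, x t j ^ 2 := by
        simp [dotProduct, sq]
      rw [this]
      nlinarith [Real.sqrt_nonneg (∑ j, x t j ^ 2)]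
    have hxx0 : 0 ≤ x t ⬝ᵥ x t := by
      simp only [dotProduct]
      exact Finset.sum_nonneg fun i _ => mul_self_nonneg _
    have hq : lam * u^2 ≤ u := by
      nlinarith [mul_le_mul_of_nonneg_left hCS hlam0.le,
        mul_le_mul_of_nonneg_left h1 hxx0,
        mul_le_mul_of_nonneg_right hxx hu0]
    have hu1 : lam * u ≤ 1 := by
      rcases eq_or_lt_of_le hu0 with h | h
      · rw [← h]; simpa using hlam0.le.trans (by linarith)
      · refine le_of_mul_le_mul_right ?_ h
        nlinarith [hq]
    -- set s = (κ/2) * u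
    have hs0 : 0 ≤ κ/2 * u := mul_nonneg hc.le hu0
    have hs1 : κ/2 * u ≤ 1 := by
      have := mul_le_mul_of_nonneg_right hlamc hu0
      linarith
    have hlog := ep_log_key hs0 hs1
    have hdetstep : (Z (t+1)).det = (Z t).det * (1 + κ/2 * u) := by
      rw [hZrec t (Finset.mem_Icc.mpr ht)]
      exact ep_det_lemma (Z t) hdet (κ/2) (x t)
    have hpos1 : (0:ℝ) < 1 + κ/2 * u := by linarith
    have hlogs : Real.log (Z (t+1)).det - Real.log (Z t).det = Real.log (1 + κ/2 * u) := by
      rw [hdetstep, Real.log_mul hPDt.det_pos.ne' hpos1.ne']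
      ring
    rw [hlogs]
    have h2c : 4 / κ = 2 / (κ/2) := by
      field_simp
      norm_num
    calc x t ⬝ᵥ ((Z t)⁻¹ *ᵥ x t) = u := rfl
      _ = (2 / (κ/2)) * (κ/2 * u) / 2 := by field_simp
      _ ≤ (2 / (κ/2)) * (2 * Real.log (1 + κ/2 * u)) / 2 := by
          have h2cpos : (0:ℝ) < 2 / (κ/2) := by positivity
          have := mul_le_mul_of_nonneg_left hlog h2cpos.le
          linarith
      _ = 4 / κ * Real.log (1 + κ/2 * u) := by rw [h2c]; ring
  -- sum up and telescope
  have hsum := Finset.sum_le_sum hterm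
  have htel : ∑ t ∈ Finset.Icc 1 T,
      (4 / κ * (Real.log (Z (t+1)).det - Real.log (Z t).det))
      = 4 / κ * (Real.log (Z (T+1)).det - Real.log (Z 1).det) := by
    rw [← Finset.mul_sum]
    congr 1
    rw [← Finset.Ico_add_one_right_eq_Icc, Finset.sum_Ico_eq_sum_range]
    have : ∀ i, Real.log (Z (1 + i + 1)).det - Real.log (Z (1 + i)).det
        = (fun k => Real.log (Z (k + 1)).det) (i + 1)
          - (fun k => Real.log (Z (k + 1)).det) i := by
      intro i
      have e1 : 1 + i + 1 = i + 1 + 1 := by omega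
      have e2 : 1 + i = i + 1 := by omega
      simp only [e1, e2]
    rw [Finset.sum_congr rfl fun i _ => this i]
    rw [Finset.sum_range_sub (fun k => Real.log (Z (k + 1)).det)]
    simp [Nat.succ_sub_one]
  have hfinal : Real.log ((Z (T + 1)).det / (Z 1).det)
      = Real.log (Z (T+1)).det - Real.log (Z 1).det := by
    have h1 : (0:ℝ) < (Z 1).det := (hPD 1 (le_refl 1) (by omega)).det_pos
    have h2 : (0:ℝ) < (Z (T+1)).det := (hPD (T+1) (by omega) (by omega)).det_pos
    rw [Real.log_div h2.ne' h1.ne']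
  rw [hfinal]
  calc ∑ t ∈ Finset.Icc 1 T, x t ⬝ᵥ ((Z t)⁻¹ *ᵥ x t)
      ≤ ∑ t ∈ Finset.Icc 1 T, (4 / κ * (Real.log (Z (t+1)).det - Real.log (Z t).det)) := hsum
    _ = 4 / κ * (Real.log (Z (T+1)).det - Real.log (Z 1).det) := htel
end

section
/- Let d, m ≥ 1, D > 0, L > 0, γ ≥ 0, let X ⊆ {x ∈ ℝ^d : ‖x‖ ≤ 1} be a finite nonempty arm set, let Z ∈ ℝ^{d×d} be symmetric positive definite, and for each i ∈ {1,…,m} let μ_i : [-D, D] → ℝ be monotonically increasing and L-Lipschitz, let θ_i ∈ ℝ^d with ‖θ_i‖ ≤ D, and let θ̂_i ∈ ℝ^d satisfy ‖θ_i - θ̂_i‖_Z² ≤ γ. Define the expected reward μ_x = (μ_1(θ_1ᵀx), …, μ_m(θ_mᵀx)) for x ∈ X. Suppose x_t ∈ X is empirically Pareto optimal with respect to the UCB indices, i.e., for every x ∈ X there exists j ∈ {1,…,m} with θ̂_jᵀx_t + √γ·‖x_t‖_{Z⁻¹} ≥ θ̂_jᵀx + √γ·‖x‖_{Z⁻¹}.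 Then the Pareto suboptimality gap of x_t satisfies Δx_t ≤ 2L·√γ·‖x_t‖_{Z⁻¹}. -/
open Matrix

/-- `v` is not dominated by `u` in the Pareto order: `v = u` or `v` strictly exceeds
`u` in some component. -/
def NotDominated {m : ℕ} (v u : Fin m → ℝ) : Prop :=
  v = u ∨ ∃ i, u i < v i

/-- The Pareto suboptimality gap of arm `x` with respect to arm set `X` and expected
reward map `μv`. -/
noncomputable def paretoGap {m : ℕ} {A : Type*} (X : Set A) (μv : A → Fin m → ℝ)
    (x : A) : ℝ :=
  sInf {ε : ℝ | 0 ≤ ε ∧ ∀ x' ∈ X, NotDominated (fun i => μv x i + ε) (μv x')}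

/-- Cauchy–Schwarz for the bilinear form of a positive semidefinite symmetric matrix. -/
lemma posdef_cauchy_schwarz {d : ℕ} (Z : Matrix (Fin d) (Fin d) ℝ) (hZ : Z.PosDef)
    (u v : Fin d → ℝ) :
    (u ⬝ᵥ (Z *ᵥ v)) ^ 2 ≤ (u ⬝ᵥ (Z *ᵥ u)) * (v ⬝ᵥ (Z *ᵥ v)) := by
  have hB : ∀ a b : Fin d → ℝ, a ⬝ᵥ (Z *ᵥ b) = b ⬝ᵥ (Z *ᵥ a) := by
    intro a b
    have hsym : Zᵀ = Z := hZ.1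
    rw [dotProduct_mulVec, ← mulVec_transpose, hsym, dotProduct_comm]
  have hnn : ∀ a : Fin d → ℝ, 0 ≤ a ⬝ᵥ (Z *ᵥ a) := by
    intro a
    have := hZ.posSemidef.dotProduct_mulVec_nonneg a
    simpa using this
  by_cases hv : v = 0
  · subst hv; simp
  · have hvv : 0 < v ⬝ᵥ (Z *ᵥ v) := by
      have := hZ.dotProduct_mulVec_pos (x := v) (by simpa using hv)
      simpa using this
    have key : ∀ t : ℝ, 0 ≤ (v ⬝ᵥ (Z *ᵥ v)) * (t * t) + (2 * (u ⬝ᵥ (Z *ᵥ v))) * t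
        + (u ⬝ᵥ (Z *ᵥ u)) := by
      intro t
      have h0 : 0 ≤ (u + t • v) ⬝ᵥ (Z *ᵥ (u + t • v)) := hnn _
      have hexp : (u + t • v) ⬝ᵥ (Z *ᵥ (u + t • v))
          = (v ⬝ᵥ (Z *ᵥ v)) * (t * t) + (2 * (u ⬝ᵥ (Z *ᵥ v))) * t + (u ⬝ᵥ (Z *ᵥ u)) := by
        rw [mulVec_add, mulVec_smul, dotProduct_add, add_dotProduct, add_dotProduct,
          smul_dotProduct, smul_dotProduct, dotProduct_smul, dotProduct_smul,
          hB v u]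
        simp [smul_eq_mul]; ring
      linarith [hexp ▸ h0]
    have hdisc := discrim_le_zero key
    rw [discrim] at hdisc
    nlinarith [hdisc]

/-- per-round Pareto suboptimality gap bound, core of the proof of
Theorem 2: if `x_t` is empirically Pareto optimal with respect to the UCB indices
and all confidence sets are valid, then `Δx_t ≤ 2L·√γ·‖x_t‖_{Z⁻¹}`. -/
theorem per_round_pareto_gap_bound
    (d m : ℕ) (hd : 1 ≤ d) (hm : 1 ≤ m)
    (D L γ : ℝ) (hD : 0 < D) (hL : 0 < L) (hγ : 0 ≤ γ)
    (X : Finset (Fin d → ℝ)) (hXne : X.Nonempty)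
    (hXnorm : ∀ x ∈ X, Real.sqrt (∑ j, x j ^ 2) ≤ 1)
    (Z : Matrix (Fin d) (Fin d) ℝ) (hZ : Z.PosDef)
    (μ : Fin m → ℝ → ℝ)
    (hμ_mono : ∀ i, MonotoneOn (μ i) (Set.Icc (-D) D))
    (hμ_lip : ∀ i, ∀ z ∈ Set.Icc (-D) D, ∀ z' ∈ Set.Icc (-D) D,
      |μ i z - μ i z'| ≤ L * |z - z'|)
    (θ θhat : Fin m → Fin d → ℝ)
    (hθ : ∀ i, Real.sqrt (∑ j, θ i j ^ 2) ≤ D)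
    (hconf : ∀ i, (θ i - θhat i) ⬝ᵥ (Z *ᵥ (θ i - θhat i)) ≤ γ)
    (xt : Fin d → ℝ) (hxt : xt ∈ X)
    (hPareto : ∀ x ∈ X, ∃ j : Fin m,
      θhat j ⬝ᵥ x + Real.sqrt γ * Real.sqrt (x ⬝ᵥ (Z⁻¹ *ᵥ x)) ≤
        θhat j ⬝ᵥ xt + Real.sqrt γ * Real.sqrt (xt ⬝ᵥ (Z⁻¹ *ᵥ xt))) :
    paretoGap (X : Set (Fin d → ℝ)) (fun x i => μ i (θ i ⬝ᵥ x)) xt ≤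
      2 * L * Real.sqrt γ * Real.sqrt (xt ⬝ᵥ (Z⁻¹ *ᵥ xt)) := by
  -- notation
  set w : (Fin d → ℝ) → ℝ := fun x => Real.sqrt (x ⬝ᵥ (Z⁻¹ *ᵥ x)) with hw
  have hwnn : ∀ x, 0 ≤ w x := fun x => Real.sqrt_nonneg _
  set β : ℝ := 2 * L * Real.sqrt γ * w xt with hβ
  have hβ0 : 0 ≤ β :=
    mul_nonneg (mul_nonneg (by positivity) (Real.sqrt_nonneg _)) (hwnn xt)
  -- invertibility of Z
  have hdet : IsUnit Z.det := isUnit_iff_ne_zero.2 hZ.det_pos.ne'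
  have hZZinv : Z * Z⁻¹ = 1 := Matrix.mul_nonsing_inv Z hdet
  -- confidence bound: |(θ i − θhat i) ⬝ x| ≤ √γ * w x
  have hconf' : ∀ i (x : Fin d → ℝ), |(θ i - θhat i) ⬝ᵥ x| ≤ Real.sqrt γ * w x := by
    intro i x
    have hcs := posdef_cauchy_schwarz Z hZ (θ i - θhat i) (Z⁻¹ *ᵥ x)
    have hZx : Z *ᵥ (Z⁻¹ *ᵥ x) = x := by
      rw [mulVec_mulVec, hZZinv, one_mulVec]
    rw [hZx] at hcs
    have hq : (Z⁻¹ *ᵥ x) ⬝ᵥ x = x ⬝ᵥ (Z⁻¹ *ᵥ x) := dotProduct_comm _ _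
    rw [hq] at hcs
    have hqnn : 0 ≤ x ⬝ᵥ (Z⁻¹ *ᵥ x) := by
      have := (hZ.inv).posSemidef.dotProduct_mulVec_nonneg x
      simpa using this
    have hsq : ((θ i - θhat i) ⬝ᵥ x) ^ 2 ≤ γ * (x ⬝ᵥ (Z⁻¹ *ᵥ x)) :=
      hcs.trans (mul_le_mul_of_nonneg_right (hconf i) hqnn)
    have := Real.sqrt_le_sqrt hsq
    rwa [Real.sqrt_sq_eq_abs, Real.sqrt_mul hγ] at this
  -- norm bound: |θ i ⬝ x| ≤ D for x ∈ X
  have hbound : ∀ i, ∀ x ∈ X, θ i ⬝ᵥ x ∈ Set.Icc (-D) D := by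
    intro i x hx
    have hcs : (θ i ⬝ᵥ x) ^ 2 ≤ (∑ j, θ i j ^ 2) * (∑ j, x j ^ 2) :=
      Finset.sum_mul_sq_le_sq_mul_sq Finset.univ (θ i) x
    have h1 : |θ i ⬝ᵥ x| ≤ Real.sqrt (∑ j, θ i j ^ 2) * Real.sqrt (∑ j, x j ^ 2) := by
      have := Real.sqrt_le_sqrt hcs
      rwa [Real.sqrt_sq_eq_abs,
        Real.sqrt_mul (Finset.sum_nonneg fun j _ => sq_nonneg _)] at this
    have h2 : Real.sqrt (∑ j, θ i j ^ 2) * Real.sqrt (∑ j, x j ^ 2) ≤ D * 1 :=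
      mul_le_mul (hθ i) (hXnorm x hx) (Real.sqrt_nonneg _) hD.le
    have h3 : |θ i ⬝ᵥ x| ≤ D := by linarith
    exact abs_le.1 h3 |>.imp id id |> fun h => ⟨h.1, h.2⟩
  -- key per-arm bound
  have hkey : ∀ x ∈ X, ∃ j : Fin m, μ j (θ j ⬝ᵥ x) ≤ μ j (θ j ⬝ᵥ xt) + β := by
    intro x hx
    obtain ⟨j, hj⟩ := hPareto x hx
    refine ⟨j, ?_⟩
    have h1 : θ j ⬝ᵥ x - θhat j ⬝ᵥ x ≤ Real.sqrt γ * w x := by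
      have := (abs_le.1 (hconf' j x)).2
      rwa [sub_dotProduct] at this
    have h2 : θhat j ⬝ᵥ xt - θ j ⬝ᵥ xt ≤ Real.sqrt γ * w xt := by
      have := (abs_le.1 (hconf' j xt)).1
      rw [sub_dotProduct] at this
      linarith
    have hchain : θ j ⬝ᵥ x ≤ θ j ⬝ᵥ xt + 2 * (Real.sqrt γ * w xt) := by
      have := hj
      simp only [hw] at *
      linarith
    have hax : θ j ⬝ᵥ x ∈ Set.Icc (-D) D := hbound j x hx
    have haxt : θ j ⬝ᵥ xt ∈ Set.Icc (-D) D := hbound j xt hxt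
    rcases le_or_gt (θ j ⬝ᵥ x) (θ j ⬝ᵥ xt) with hle | hlt
    · have := hμ_mono j hax haxt hle
      linarith
    · have hlip := hμ_lip j (θ j ⬝ᵥ x) hax (θ j ⬝ᵥ xt) haxt
      have habs : |θ j ⬝ᵥ x - θ j ⬝ᵥ xt| = θ j ⬝ᵥ x - θ j ⬝ᵥ xt :=
        abs_of_pos (by linarith)
      have h4 : μ j (θ j ⬝ᵥ x) - μ j (θ j ⬝ᵥ xt)
          ≤ L * (θ j ⬝ᵥ x - θ j ⬝ᵥ xt) := by
        calc μ j (θ j ⬝ᵥ x) - μ j (θ j ⬝ᵥ xt) ≤ |μ j (θ j ⬝ᵥ x) - μ j (θ j ⬝ᵥ xt)| :=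
              le_abs_self _
          _ ≤ L * |θ j ⬝ᵥ x - θ j ⬝ᵥ xt| := hlip
          _ = L * (θ j ⬝ᵥ x - θ j ⬝ᵥ xt) := by rw [habs]
      have h5 : L * (θ j ⬝ᵥ x - θ j ⬝ᵥ xt) ≤ L * (2 * (Real.sqrt γ * w xt)) :=
        mul_le_mul_of_nonneg_left (by linarith) hL.le
      have : β = L * (2 * (Real.sqrt γ * w xt)) := by rw [hβ]; ring
      linarith
  -- conclude via density
  refine le_of_forall_gt_imp_ge_of_dense fun ε hε => ?_
  refine csInf_le ⟨0, fun y hy => hy.1⟩ ⟨le_trans hβ0 hε.le, ?_⟩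
  intro x' hx'
  rw [Finset.mem_coe] at hx'
  obtain ⟨j, hj⟩ := hkey x' hx'
  exact Or.inr ⟨j, by dsimp only; linarith⟩
end

section
/- Let d ≥ 1, D > 0, R > 0, U > 0, κ > 0, λ > 0. Let g : ℝ → ℝ be convex with derivative μ = g' satisfying μ'(z) ≥ κ on (-D, D) and |μ(z)| ≤ U on [-D, D]. Let θ* ∈ ℝ^d with ‖θ*‖ ≤ D. Let x_1, …, x_t ∈ ℝ^d with ‖x_s‖ ≤ 1 and y_1, …, y_t ∈ ℝ with |y_s| ≤ R. Define Z_1 = λ·I_d, Z_{s+1} = Z_s + (κ/2)·x_s x_sᵀ, θ̂_1 = 0, and θ̂_{s+1} = argmin over ‖θ‖ ≤ D of (1/2)‖θ - θ̂_s‖_{Z_{s+1}}² + θᵀ∇ℓ_s(θ̂_s), where ∇ℓ_s(θ) = (μ(θᵀx_s) - y_s)·x_s. Define a_s = (y_s - μ(θ*ᵀx_s))·x_sᵀ(θ̂_s - θ*) and b_s = (x_sᵀ(θ* - θ̂_s))². Then ‖θ̂_{t+1} - θ*‖_{Z_{t+1}}² ≤ λD² + 2·Σ_{s=1}^t a_s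 - (κ/2)·Σ_{s=1}^t b_s + (R+U)²·Σ_{s=1}^t x_sᵀZ_{s+1}⁻¹x_s. -/
open Matrix


private lemma my_dot_sym {d : ℕ} (M : Matrix (Fin d) (Fin d) ℝ) (h : Mᵀ = M)
    (u w : Fin d → ℝ) : u ⬝ᵥ (M *ᵥ w) = w ⬝ᵥ (M *ᵥ u) := by
  have hM : ∀ i j, M i j = M j i := fun i j => by
    conv_lhs => rw [← h]
    rfl
  simp only [dotProduct, mulVec, Finset.mul_sum]
  rw [Finset.sum_comm]
  refine Finset.sum_congr rfl fun i _ => Finset.sum_congr rfl fun j _ => ?_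
  rw [hM j i]; ring

private lemma my_dot_vecMulVec {d : ℕ} (w u v : Fin d → ℝ) :
    u ⬝ᵥ (vecMulVec w w *ᵥ v) = (w ⬝ᵥ u) * (w ⬝ᵥ v) := by
  simp only [dotProduct, mulVec, vecMulVec_apply, Finset.mul_sum]
  rw [Finset.sum_comm]
  refine Finset.sum_congr rfl fun i _ => ?_
  rw [Finset.sum_mul]
  exact Finset.sum_congr rfl fun j _ => by ring

private lemma my_quad_expand {d : ℕ} (M : Matrix (Fin d) (Fin d) ℝ) (h : Mᵀ = M)
    (a w : Fin d → ℝ) (τ : ℝ) :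
    (a + τ • w) ⬝ᵥ (M *ᵥ (a + τ • w)) =
      a ⬝ᵥ (M *ᵥ a) + 2 * τ * (a ⬝ᵥ (M *ᵥ w)) + τ ^ 2 * (w ⬝ᵥ (M *ᵥ w)) := by
  have hs := my_dot_sym M h w a
  simp only [mulVec_add, mulVec_smul, dotProduct_add, add_dotProduct, dotProduct_smul,
    smul_dotProduct, smul_eq_mul]
  rw [hs]; ring

private lemma my_scalar_vi {q L : ℝ} (hq : 0 ≤ q)
    (h : ∀ τ : ℝ, 0 < τ → τ ≤ 1 → 0 ≤ τ * L + τ ^ 2 * (q / 2)) : 0 ≤ L := by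
  by_contra hL
  push_neg at hL
  rcases eq_or_lt_of_le hq with hq0 | hq0
  · have := h 1 one_pos le_rfl
    rw [← hq0] at this
    nlinarith
  · rcases le_or_gt (-L / q) 1 with hc | hc
    · have hτ : 0 < -L / q := div_pos (neg_pos.2 hL) hq0
      have := h (-L / q) hτ hc
      have hexp : (-L / q) * L + (-L / q) ^ 2 * (q / 2) = -(L ^ 2) / (2 * q) := by
        field_simp; ring
      rw [hexp] at this
      have hL2 : 0 < L ^ 2 := by nlinarith
      have hneg : -(L ^ 2) / (2 * q) < 0 :=
        div_neg_of_neg_of_pos (by nlinarith) (by linarith)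
      linarith
    · have hqL : q < -L := by
        rw [lt_div_iff₀ hq0] at hc; linarith
      have := h 1 one_pos le_rfl
      nlinarith

private lemma my_cs {d : ℕ} (v w : Fin d → ℝ) :
    |v ⬝ᵥ w| ≤ Real.sqrt (∑ j, v j ^ 2) * Real.sqrt (∑ j, w j ^ 2) := by
  rw [← Real.sqrt_sq_eq_abs, ← Real.sqrt_mul (by positivity)]
  exact Real.sqrt_le_sqrt (Finset.sum_mul_sq_le_sq_mul_sq _ _ _)

private lemma my_ball_convex {d : ℕ} (Dv : ℝ) (u w : Fin d → ℝ)
    (hu : Real.sqrt (∑ j, u j ^ 2) ≤ Dv) (hw : Real.sqrt (∑ j, w j ^ 2) ≤ Dv)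
    (τ : ℝ) (h0 : 0 ≤ τ) (h1 : τ ≤ 1) :
    Real.sqrt (∑ j, (u + τ • (w - u)) j ^ 2) ≤ Dv := by
  have hnorm : ∀ f : Fin d → ℝ,
      Real.sqrt (∑ j, f j ^ 2) = ‖(EuclideanSpace.equiv (Fin d) ℝ).symm f‖ := by
    intro f
    rw [EuclideanSpace.norm_eq]
    congr 1
    refine Finset.sum_congr rfl fun j _ => ?_
    simp [Real.norm_eq_abs, sq_abs]
  rw [hnorm] at hu hw ⊢
  set e := (EuclideanSpace.equiv (Fin d) ℝ).symm with he
  have hsplit : e (u + τ • (w - u)) = (1 - τ) • e u + τ • e w := by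
    rw [map_add, _root_.map_smul, map_sub]
    module
  rw [hsplit]
  calc ‖(1 - τ) • e u + τ • e w‖ ≤ ‖(1 - τ) • e u‖ + ‖τ • e w‖ := norm_add_le _ _
    _ = (1 - τ) * ‖e u‖ + τ * ‖e w‖ := by
        rw [norm_smul, norm_smul, Real.norm_eq_abs, Real.norm_eq_abs,
          abs_of_nonneg (by linarith), abs_of_nonneg h0]
    _ ≤ (1 - τ) * Dv + τ * Dv := by
        have h2 : (0:ℝ) ≤ 1 - τ := by linarith
        gcongr
    _ = Dv := by ring

private lemma my_strong_mono (Dv κv : ℝ) (hκ : 0 < κv) (μ μ' : ℝ → ℝ)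
    (hmono : MonotoneOn μ (Set.Icc (-Dv) Dv))
    (hderiv : ∀ z ∈ Set.Ioo (-Dv) Dv, HasDerivAt μ (μ' z) z)
    (hge : ∀ z ∈ Set.Ioo (-Dv) Dv, κv ≤ μ' z) :
    ∀ u ∈ Set.Icc (-Dv) Dv, ∀ v ∈ Set.Icc (-Dv) Dv,
      κv * (u - v) ^ 2 ≤ (μ u - μ v) * (u - v) := by
  suffices h : ∀ u ∈ Set.Icc (-Dv) Dv, ∀ v ∈ Set.Icc (-Dv) Dv, v < u →
      κv * (u - v) ≤ μ u - μ v by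
    intro u hu v hv
    rcases lt_trichotomy v u with h1 | h1 | h1
    · have := h u hu v hv h1; nlinarith
    · subst h1; simp
    · have := h v hv u hu h1; nlinarith
  intro u hu v hv hvu
  have key : ∀ δ : ℝ, 0 < δ → δ < (u - v) / 2 → κv * (u - v - 2 * δ) ≤ μ u - μ v := by
    intro δ hδ0 hδ
    set a := v + δ with ha
    set b := u - δ with hb
    have hab : a < b := by simp only [ha, hb]; linarith
    have haI : a ∈ Set.Ioo (-Dv) Dv := ⟨by have := hv.1; simp only [ha]; linarith,
      by have := hu.2; simp only [ha]; linarith⟩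
    have hbI : b ∈ Set.Ioo (-Dv) Dv := ⟨by have := hv.1; simp only [hb]; linarith,
      by have := hu.2; simp only [hb]; linarith⟩
    have hsub : Set.Icc a b ⊆ Set.Ioo (-Dv) Dv := fun z hz =>
      ⟨lt_of_lt_of_le haI.1 hz.1, lt_of_le_of_lt hz.2 hbI.2⟩
    have hcont : ContinuousOn μ (Set.Icc a b) := fun z hz =>
      ((hderiv z (hsub hz)).continuousAt).continuousWithinAt
    obtain ⟨c, hc, hslope⟩ := exists_hasDerivAt_eq_slope μ μ' hab hcont
      (fun z hz => hderiv z (hsub ⟨hz.1.le, hz.2.le⟩))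
    have hcI : c ∈ Set.Ioo (-Dv) Dv := hsub ⟨hc.1.le, hc.2.le⟩
    have h1 : κv ≤ (μ b - μ a) / (b - a) := hslope ▸ hge c hcI
    have hba : 0 < b - a := by linarith
    have h2 : κv * (b - a) ≤ μ b - μ a := by
      rw [le_div_iff₀ hba] at h1; linarith
    have h3 : μ v ≤ μ a := hmono hv ⟨haI.1.le, haI.2.le⟩ (by simp only [ha]; linarith)
    have h4 : μ b ≤ μ u := hmono ⟨hbI.1.le, hbI.2.le⟩ hu (by simp only [hb]; linarith)
    have hba' : b - a = u - v - 2 * δ := by simp only [ha, hb]; ring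
    rw [hba'] at h2
    linarith
  by_contra hcon
  push_neg at hcon
  set ε := κv * (u - v) - (μ u - μ v) with hε
  have hε0 : 0 < ε := by linarith
  set δ := min (ε / (4 * κv)) ((u - v) / 4) with hδdef
  have hδ0 : 0 < δ := lt_min (by positivity) (by linarith)
  have hδlt : δ < (u - v) / 2 := lt_of_le_of_lt (min_le_right _ _) (by linarith)
  have h2κδ : 2 * κv * δ ≤ ε / 2 := by
    have h5 : δ ≤ ε / (4 * κv) := min_le_left _ _
    calc 2 * κv * δ ≤ 2 * κv * (ε / (4 * κv)) := by
          have : (0:ℝ) < 2 * κv := by linarith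
          nlinarith
      _ = ε / 2 := by field_simp; ring
  have hkey := key δ hδ0 hδlt
  nlinarith

private lemma my_psd_dot {d : ℕ} {M : Matrix (Fin d) (Fin d) ℝ} (h : M.PosSemidef)
    (v : Fin d → ℝ) : 0 ≤ v ⬝ᵥ (M *ᵥ v) := by
  have := h.dotProduct_mulVec_nonneg v
  have hst : star v = v := funext fun i => by simp
  rwa [hst] at this

private lemma my_step_bound {d : ℕ} (Zm : Matrix (Fin d) (Fin d) ℝ) (hZ : Zm.PosDef)
    (Dv : ℝ) (θs θn θt xv : Fin d → ℝ) (c : ℝ)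
    (hθn : Real.sqrt (∑ j, θn j ^ 2) ≤ Dv) (hθt : Real.sqrt (∑ j, θt j ^ 2) ≤ Dv)
    (hmin : ∀ θ' : Fin d → ℝ, Real.sqrt (∑ j, θ' j ^ 2) ≤ Dv →
      1 / 2 * ((θn - θs) ⬝ᵥ (Zm *ᵥ (θn - θs))) + θn ⬝ᵥ (c • xv) ≤
      1 / 2 * ((θ' - θs) ⬝ᵥ (Zm *ᵥ (θ' - θs))) + θ' ⬝ᵥ (c • xv)) :
    (θn - θt) ⬝ᵥ (Zm *ᵥ (θn - θt)) ≤ (θs - θt) ⬝ᵥ (Zm *ᵥ (θs - θt))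
      + 2 * c * (xv ⬝ᵥ (θt - θs)) + c ^ 2 * (xv ⬝ᵥ (Zm⁻¹ *ᵥ xv)) := by
  have hsymT : Zmᵀ = Zm := by
    have h1 := hZ.1
    ext i j
    have := congrFun (congrFun h1 i) j
    simpa [Matrix.conjTranspose_apply] using this
  set w : Fin d → ℝ := θt - θn with hw
  set q : ℝ := w ⬝ᵥ (Zm *ᵥ w) with hqdef
  set L : ℝ := (θn - θs) ⬝ᵥ (Zm *ᵥ w) + c * (xv ⬝ᵥ w) with hLdef
  have hq : 0 ≤ q := my_psd_dot hZ.posSemidef w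
  have hL : 0 ≤ L := by
    apply my_scalar_vi hq
    intro τ hτ0 hτ1
    have hball : Real.sqrt (∑ j, (θn + τ • w) j ^ 2) ≤ Dv := by
      have := my_ball_convex Dv θn θt hθn hθt τ hτ0.le hτ1
      simpa [hw] using this
    have hmin' := hmin (θn + τ • w) hball
    have hre : θn + τ • w - θs = (θn - θs) + τ • w := by
      funext j; simp; try ring
    rw [hre, my_quad_expand Zm hsymT (θn - θs) w τ] at hmin'
    have hdot : (θn + τ • w) ⬝ᵥ (c • xv) = θn ⬝ᵥ (c • xv) + τ * (c * (xv ⬝ᵥ w)) := by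
      simp [add_dotProduct, smul_dotProduct, dotProduct_smul, smul_eq_mul,
        dotProduct_comm w xv]
      try ring
    rw [hdot] at hmin'
    simp only [hLdef, hqdef]
    nlinarith [hmin']
  have hFt := hmin θt hθt
  have hts : θt - θs = (θn - θs) + (1:ℝ) • w := by funext j; simp [hw]; try ring
  have hexp1 : (θt - θs) ⬝ᵥ (Zm *ᵥ (θt - θs)) =
      (θn - θs) ⬝ᵥ (Zm *ᵥ (θn - θs)) + 2 * ((θn - θs) ⬝ᵥ (Zm *ᵥ w)) + q := by
    rw [hts, my_quad_expand Zm hsymT (θn - θs) w 1]; ring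
  have hdot2 : θt ⬝ᵥ (c • xv) = θn ⬝ᵥ (c • xv) + c * (xv ⬝ᵥ w) := by
    have : θt = θn + w := by funext j; simp [hw]
    rw [this]
    simp [add_dotProduct, dotProduct_smul, smul_eq_mul, dotProduct_comm w xv]
    try ring
  have hdet : IsUnit Zm.det := hZ.det_pos.ne'.isUnit
  have hZZ : Zm *ᵥ (Zm⁻¹ *ᵥ xv) = xv := by
    rw [mulVec_mulVec, Matrix.mul_nonsing_inv _ hdet, one_mulVec]
  have hpsd2 : 0 ≤ ((θn - θs) + c • (Zm⁻¹ *ᵥ xv)) ⬝ᵥ (Zm *ᵥ ((θn - θs) + c • (Zm⁻¹ *ᵥ xv))) :=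
    my_psd_dot hZ.posSemidef _
  rw [my_quad_expand Zm hsymT (θn - θs) (Zm⁻¹ *ᵥ xv) c, hZZ] at hpsd2
  have hinv : (Zm⁻¹ *ᵥ xv) ⬝ᵥ xv = xv ⬝ᵥ (Zm⁻¹ *ᵥ xv) := dotProduct_comm _ _
  rw [hinv] at hpsd2
  have hux : (θn - θs) ⬝ᵥ xv = xv ⬝ᵥ (θn - θs) := dotProduct_comm _ _
  rw [hux] at hpsd2
  have hc1 : θn ⬝ᵥ (c • xv) = c * (xv ⬝ᵥ θn) := by
    simp [dotProduct_smul, smul_eq_mul, dotProduct_comm]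
  have hc2 : xv ⬝ᵥ (θn - θs) = xv ⬝ᵥ θn - xv ⬝ᵥ θs := dotProduct_sub _ _ _
  have hnt : (θn - θt) ⬝ᵥ (Zm *ᵥ (θn - θt)) = q := by
    have : θn - θt = (-1 : ℝ) • w := by funext j; simp [hw]
    rw [this]
    simp only [smul_dotProduct, mulVec_smul, dotProduct_smul, smul_eq_mul, hqdef]
    ring
  have hst2 : (θs - θt) ⬝ᵥ (Zm *ᵥ (θs - θt)) = (θt - θs) ⬝ᵥ (Zm *ᵥ (θt - θs)) := by
    have : θs - θt = (-1 : ℝ) • (θt - θs) := by funext j; simp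
    rw [this]
    simp only [smul_dotProduct, mulVec_smul, dotProduct_smul, smul_eq_mul]
    ring
  have hxvts : xv ⬝ᵥ (θt - θs) = xv ⬝ᵥ θt - xv ⬝ᵥ θs := dotProduct_sub _ _ _
  rw [hexp1, hdot2] at hFt
  rw [hnt, hst2, hexp1, hxvts]
  have hc4 : xv ⬝ᵥ w = xv ⬝ᵥ θt - xv ⬝ᵥ θn := by rw [hw]; exact dotProduct_sub _ _ _
  have hL' := hL
  rw [hLdef, hc4] at hL'
  rw [hc2] at hpsd2
  linarith [hpsd2, hL']

set_option maxHeartbeats 2000000 in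
/-- deterministic recursion underlying Theorem 1.
Combining the strong-convexity lemma, the expected-loss minimality of `θ*`, and the
online Newton step inequality yields
`‖θ̂_{t+1} - θ*‖²_{Z_{t+1}} ≤ λD² + 2Σa_s - (κ/2)Σb_s + (R+U)²·Σ xᵀZ⁻¹x`. -/
theorem confidence_recursion_bound
    (d : ℕ) (hd : 1 ≤ d)
    (D R U κ lam : ℝ) (hD : 0 < D) (hR : 0 < R) (hU : 0 < U) (hκ : 0 < κ)
    (hlam : 0 < lam)
    (g μ μ' : ℝ → ℝ)
    (hg_conv : ConvexOn ℝ Set.univ g)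
    (hg_deriv : ∀ z : ℝ, HasDerivAt g (μ z) z)
    (hμ_deriv : ∀ z ∈ Set.Ioo (-D) D, HasDerivAt μ (μ' z) z)
    (hμ'_ge : ∀ z ∈ Set.Ioo (-D) D, κ ≤ μ' z)
    (hμ_bdd : ∀ z ∈ Set.Icc (-D) D, |μ z| ≤ U)
    (θstar : Fin d → ℝ) (hθstar : Real.sqrt (∑ j, θstar j ^ 2) ≤ D)
    (t : ℕ) (x : ℕ → Fin d → ℝ) (y : ℕ → ℝ)
    (hx : ∀ s ∈ Finset.Icc 1 t, Real.sqrt (∑ j, x s j ^ 2) ≤ 1)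
    (hy : ∀ s ∈ Finset.Icc 1 t, |y s| ≤ R)
    (Z : ℕ → Matrix (Fin d) (Fin d) ℝ)
    (hZ1 : Z 1 = lam • (1 : Matrix (Fin d) (Fin d) ℝ))
    (hZrec : ∀ s ∈ Finset.Icc 1 t, Z (s + 1) = Z s + (κ / 2) • vecMulVec (x s) (x s))
    (θhat : ℕ → Fin d → ℝ)
    (hθhat1 : θhat 1 = 0)
    (hθhat_rec : ∀ s ∈ Finset.Icc 1 t,
      Real.sqrt (∑ j, θhat (s + 1) j ^ 2) ≤ D ∧
      ∀ θ' : Fin d → ℝ, Real.sqrt (∑ j, θ' j ^ 2) ≤ D →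
        1 / 2 * ((θhat (s + 1) - θhat s) ⬝ᵥ (Z (s + 1) *ᵥ (θhat (s + 1) - θhat s))) +
          θhat (s + 1) ⬝ᵥ ((μ (θhat s ⬝ᵥ x s) - y s) • x s) ≤
        1 / 2 * ((θ' - θhat s) ⬝ᵥ (Z (s + 1) *ᵥ (θ' - θhat s))) +
          θ' ⬝ᵥ ((μ (θhat s ⬝ᵥ x s) - y s) • x s)) :
    (θhat (t + 1) - θstar) ⬝ᵥ (Z (t + 1) *ᵥ (θhat (t + 1) - θstar)) ≤
      lam * D ^ 2 +
        2 * ∑ s ∈ Finset.Icc 1 t, (y s - μ (θstar ⬝ᵥ x s)) * (x s ⬝ᵥ (θhat s - θstar)) -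
        κ / 2 * ∑ s ∈ Finset.Icc 1 t, (x s ⬝ᵥ (θstar - θhat s)) ^ 2 +
        (R + U) ^ 2 * ∑ s ∈ Finset.Icc 1 t, x s ⬝ᵥ ((Z (s + 1))⁻¹ *ᵥ x s) := by
  classical
  -- θhat stays in the ball
  have hθD : ∀ s, 1 ≤ s → s ≤ t + 1 → Real.sqrt (∑ j, θhat s j ^ 2) ≤ D := by
    intro s h1 h2
    rcases eq_or_lt_of_le h1 with h | h
    · rw [← h, hθhat1]
      simpa using hD.le
    · have hmem : s - 1 ∈ Finset.Icc 1 t := Finset.mem_Icc.mpr ⟨by omega, by omega⟩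
      have hh := (hθhat_rec (s - 1) hmem).1
      rwa [show s - 1 + 1 = s from by omega] at hh
  -- positive definiteness of Z
  have hlamPD : (lam • (1 : Matrix (Fin d) (Fin d) ℝ)).PosDef := by
    refine Matrix.PosDef.of_dotProduct_mulVec_pos ?_ ?_
    · rw [Matrix.IsHermitian]
      rw [Matrix.conjTranspose_smul, Matrix.conjTranspose_one]
      simp
    · intro v hv
      have hsv : star v = v := funext fun i => by simp
      rw [hsv, Matrix.smul_mulVec, one_mulVec, dotProduct_smul, smul_eq_mul]
      have hvv : 0 < v ⬝ᵥ v := by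
        obtain ⟨i, hi⟩ := Function.ne_iff.1 hv
        have hii : (0:ℝ) < v i * v i := mul_self_pos.2 (by simpa using hi)
        simp only [dotProduct]
        exact Finset.sum_pos' (fun j _ => mul_self_nonneg _) ⟨i, Finset.mem_univ i, hii⟩
      exact mul_pos hlam hvv
  have hPSDx : ∀ w : Fin d → ℝ, ((κ / 2) • vecMulVec w w).PosSemidef := by
    intro w
    refine Matrix.PosSemidef.of_dotProduct_mulVec_nonneg ?_ ?_
    · rw [Matrix.IsHermitian]
      ext i j
      simp [Matrix.conjTranspose_apply, Matrix.vecMulVec_apply, mul_comm]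
    · intro v
      have hsv : star v = v := funext fun i => by simp
      rw [hsv, Matrix.smul_mulVec, dotProduct_smul, smul_eq_mul, my_dot_vecMulVec]
      nlinarith [mul_self_nonneg (w ⬝ᵥ v), hκ.le]
  have hZPD : ∀ n, n ≤ t → (Z (n + 1)).PosDef := by
    intro n
    induction n with
    | zero => intro _; rw [hZ1]; exact hlamPD
    | succ m ih =>
      intro hm
      have hmem : m + 1 ∈ Finset.Icc 1 t := Finset.mem_Icc.mpr ⟨by omega, hm⟩
      rw [hZrec (m + 1) hmem]
      exact (ih (by omega)).add_posSemidef (hPSDx (x (m + 1)))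
  -- monotonicity and strong monotonicity of μ
  have hmono : MonotoneOn μ (Set.Icc (-D) D) := by
    have hderiv_g : deriv g = μ := funext fun z => (hg_deriv z).deriv
    have hm := hg_conv.monotoneOn_deriv (fun z _ => (hg_deriv z).differentiableAt)
    rw [hderiv_g] at hm
    exact hm.mono (Set.subset_univ _)
  have hsm := my_strong_mono D κ hκ μ μ' hmono hμ_deriv hμ'_ge
  -- Cauchy–Schwarz bound
  have hdotD : ∀ θ : Fin d → ℝ, Real.sqrt (∑ j, θ j ^ 2) ≤ D →
      ∀ s ∈ Finset.Icc 1 t, |θ ⬝ᵥ x s| ≤ D := by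
    intro θ hθ s hs
    calc |θ ⬝ᵥ x s| ≤ Real.sqrt (∑ j, θ j ^ 2) * Real.sqrt (∑ j, x s j ^ 2) := my_cs _ _
      _ ≤ D * 1 := mul_le_mul hθ (hx s hs) (Real.sqrt_nonneg _) hD.le
      _ = D := mul_one D
  -- main induction
  have main : ∀ n, n ≤ t →
      (θhat (n + 1) - θstar) ⬝ᵥ (Z (n + 1) *ᵥ (θhat (n + 1) - θstar)) ≤
        lam * D ^ 2 + ∑ s ∈ Finset.Icc 1 n,
          (2 * ((y s - μ (θstar ⬝ᵥ x s)) * (x s ⬝ᵥ (θhat s - θstar))) -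
            κ / 2 * (x s ⬝ᵥ (θstar - θhat s)) ^ 2 +
            (R + U) ^ 2 * (x s ⬝ᵥ ((Z (s + 1))⁻¹ *ᵥ x s))) := by
    intro n
    induction n with
    | zero =>
      intro _
      rw [show Finset.Icc 1 0 = (∅ : Finset ℕ) from Finset.Icc_eq_empty (by omega)]
      rw [Finset.sum_empty, add_zero]
      simp only [zero_add]
      rw [hθhat1, hZ1, zero_sub, Matrix.smul_mulVec, one_mulVec,
        dotProduct_smul, smul_eq_mul, dotProduct_neg, neg_dotProduct, neg_neg]
      have hdd : θstar ⬝ᵥ θstar = ∑ j, θstar j ^ 2 := by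
        simp [dotProduct, pow_two]
      rw [hdd]
      have h0 : (0:ℝ) ≤ ∑ j, θstar j ^ 2 := by positivity
      have hsq : ∑ j, θstar j ^ 2 ≤ D ^ 2 := by
        nlinarith [Real.sq_sqrt h0, Real.sqrt_nonneg (∑ j, θstar j ^ 2)]
      exact mul_le_mul_of_nonneg_left hsq hlam.le
    | succ n ih =>
      intro hn1
      have hnt' : n ≤ t := Nat.le_of_succ_le hn1
      have hmem : n + 1 ∈ Finset.Icc 1 t := Finset.mem_Icc.mpr ⟨by omega, hn1⟩
      have hrec := hθhat_rec (n + 1) hmem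
      have hPDn2 : (Z (n + 1 + 1)).PosDef := hZPD (n + 1) hn1
      have hstep := my_step_bound (Z (n + 1 + 1)) hPDn2 D (θhat (n + 1)) (θhat (n + 1 + 1))
        θstar (x (n + 1)) (μ (θhat (n + 1) ⬝ᵥ x (n + 1)) - y (n + 1)) hrec.1 hθstar hrec.2
      obtain ⟨A, hA⟩ : ∃ a, θstar ⬝ᵥ x (n + 1) = a := ⟨_, rfl⟩
      obtain ⟨B, hB⟩ : ∃ b, θhat (n + 1) ⬝ᵥ x (n + 1) = b := ⟨_, rfl⟩
      have hd1 : x (n + 1) ⬝ᵥ (θstar - θhat (n + 1)) = A - B := by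
        rw [dotProduct_sub, dotProduct_comm (x (n + 1)) θstar,
          dotProduct_comm (x (n + 1)) (θhat (n + 1)), hA, hB]
      have hd2 : x (n + 1) ⬝ᵥ (θhat (n + 1) - θstar) = B - A := by
        rw [dotProduct_sub, dotProduct_comm (x (n + 1)) θstar,
          dotProduct_comm (x (n + 1)) (θhat (n + 1)), hA, hB]
      rw [hB, hd1] at hstep
      have hu1 : |B| ≤ D := by
        rw [← hB]; exact hdotD (θhat (n + 1)) (hθD (n + 1) (by omega) (by omega)) (n + 1) hmem
      have hv1 : |A| ≤ D := by
        rw [← hA]; exact hdotD θstar hθstar (n + 1) hmem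
      have hBm : B ∈ Set.Icc (-D) D := Set.mem_Icc.mpr (abs_le.1 hu1)
      have hAm : A ∈ Set.Icc (-D) D := Set.mem_Icc.mpr (abs_le.1 hv1)
      have hsm' := hsm B hBm A hAm
      have hμB := abs_le.1 (hμ_bdd B hBm)
      have hμA := abs_le.1 (hμ_bdd A hAm)
      have hyb := abs_le.1 (hy (n + 1) hmem)
      have hψ : 0 ≤ x (n + 1) ⬝ᵥ ((Z (n + 1 + 1))⁻¹ *ᵥ x (n + 1)) :=
        my_psd_dot hPDn2.inv.posSemidef _
      have hc2 : (μ B - y (n + 1)) ^ 2 ≤ (R + U) ^ 2 := by nlinarith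
      have hsplit : (θhat (n + 1) - θstar) ⬝ᵥ (Z (n + 1 + 1) *ᵥ (θhat (n + 1) - θstar)) =
          (θhat (n + 1) - θstar) ⬝ᵥ (Z (n + 1) *ᵥ (θhat (n + 1) - θstar)) +
            κ / 2 * (B - A) ^ 2 := by
        rw [hZrec (n + 1) hmem, add_mulVec, dotProduct_add, Matrix.smul_mulVec,
          dotProduct_smul, smul_eq_mul, my_dot_vecMulVec, hd2]
        ring
      rw [hsplit] at hstep
      have ihh := ih hnt'
      rw [Finset.sum_Icc_succ_top (by omega : 1 ≤ n + 1)]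
      rw [hd1, hd2, hA]
      -- abstract the large subexpressions into scalar variables
      obtain ⟨P, hP⟩ : ∃ p, x (n + 1) ⬝ᵥ ((Z (n + 1 + 1))⁻¹ *ᵥ x (n + 1)) = p := ⟨_, rfl⟩
      obtain ⟨E, hE⟩ : ∃ e,
          (θhat (n + 1) - θstar) ⬝ᵥ (Z (n + 1) *ᵥ (θhat (n + 1) - θstar)) = e := ⟨_, rfl⟩
      obtain ⟨W, hW⟩ : ∃ w0,
          (θhat (n + 1 + 1) - θstar) ⬝ᵥ (Z (n + 1 + 1) *ᵥ (θhat (n + 1 + 1) - θstar)) = w0 :=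
        ⟨_, rfl⟩
      obtain ⟨S, hS⟩ : ∃ s0, ∑ s ∈ Finset.Icc 1 n,
          (2 * ((y s - μ (θstar ⬝ᵥ x s)) * (x s ⬝ᵥ (θhat s - θstar))) -
            κ / 2 * (x s ⬝ᵥ (θstar - θhat s)) ^ 2 +
            (R + U) ^ 2 * (x s ⬝ᵥ ((Z (s + 1))⁻¹ *ᵥ x s))) = s0 := ⟨_, rfl⟩
      rw [hP] at hstep hψ
      rw [hE] at hstep ihh
      rw [hW] at hstep
      rw [hS] at ihh
      rw [hP, hW, hS]
      have hprod : (μ B - y (n + 1)) ^ 2 * P ≤ (R + U) ^ 2 * P :=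
        mul_le_mul_of_nonneg_right hc2 hψ
      have hκsq : 0 ≤ κ * (B - A) ^ 2 := mul_nonneg hκ.le (sq_nonneg (B - A))
      linarith [hstep, ihh, hsm', hprod, hκsq]
  have hmain := main t le_rfl
  calc (θhat (t + 1) - θstar) ⬝ᵥ (Z (t + 1) *ᵥ (θhat (t + 1) - θstar)) ≤
      lam * D ^ 2 + ∑ s ∈ Finset.Icc 1 t,
        (2 * ((y s - μ (θstar ⬝ᵥ x s)) * (x s ⬝ᵥ (θhat s - θstar))) -
          κ / 2 * (x s ⬝ᵥ (θstar - θhat s)) ^ 2 +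
          (R + U) ^ 2 * (x s ⬝ᵥ ((Z (s + 1))⁻¹ *ᵥ x s))) := hmain
    _ = lam * D ^ 2 +
        2 * ∑ s ∈ Finset.Icc 1 t, (y s - μ (θstar ⬝ᵥ x s)) * (x s ⬝ᵥ (θhat s - θstar)) -
        κ / 2 * ∑ s ∈ Finset.Icc 1 t, (x s ⬝ᵥ (θstar - θhat s)) ^ 2 +
        (R + U) ^ 2 * ∑ s ∈ Finset.Icc 1 t, x s ⬝ᵥ ((Z (s + 1))⁻¹ *ᵥ x s) := by
      rw [Finset.sum_add_distrib, Finset.sum_sub_distrib, ← Finset.mul_sum,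
        ← Finset.mul_sum, ← Finset.mul_sum]
      ring
end
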